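/- Proposition 1: The function P(d) = sup{ μ(A) : μ a probability measure with D(μ‖μ0) ≤ d } satisfies: (1) P is concave on [0,∞); (2) P(0) = μ0(A); (3) P is nondecreasing on [0,∞), and if 0 ≤ d1 < d2 satisfy P(d1) = P(d2), then P(d1) = P(d2) ∈ {0,1} (i.e. P is strictly increasing in d except where it equals 0 or 1). -/

import Mathlib

open MeasureTheory Real Filter
open scoped ENNReal NNReal

open scoped Classical in
/-- Kullback–Leibler divergence `D(μ‖ν)` between measures, valued in `EReal`:
infinite unless `μ ≪ ν` and the log-likelihood ratio is `μ`-integrable. -/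
noncomputable def klDiv {Ω : Type*} [MeasurableSpace Ω] (μ ν : Measure Ω) : EReal :=
  if μ ≪ ν ∧ Integrable (llr μ ν) μ then ((∫ ω, llr μ ν ω ∂μ : ℝ) : EReal) else ⊤

/-- Compound outage probability for the class `{μ : D(μ‖μ0) ≤ d}`. -/
noncomputable def compoundOutage {Ω : Type*} [MeasurableSpace Ω] (μ0 : Measure Ω)
    (A : Set Ω) (d : ℝ) : ℝ :=
  sSup {p : ℝ | ∃ μ : Measure Ω, IsProbabilityMeasure μ ∧ klDiv μ μ0 ≤ (d : EReal) ∧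
    p = (μ A).toReal}

section Helpers
variable {Ω : Type*} [MeasurableSpace Ω]

lemma aux_phi_lt {t : ℝ} (ht : 0 ≤ t) (hne : t ≠ 1) : t - 1 < t * Real.log t := by
  rcases eq_or_lt_of_le ht with h | h
  · simp [← h]
  · have h1 : (t⁻¹ : ℝ) ≠ 1 := by rw [ne_eq, inv_eq_one]; exact hne
    have h2 := Real.log_lt_sub_one_of_pos (inv_pos.mpr h) h1
    rw [Real.log_inv] at h2
    have ht' : t ≠ 0 := ne_of_gt h
    have h3 : t * (-Real.log t) < t * (t⁻¹ - 1) := mul_lt_mul_of_pos_left h2 h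
    rw [mul_sub, mul_inv_cancel₀ ht'] at h3
    linarith

lemma aux_phi_le {t : ℝ} (ht : 0 ≤ t) : t - 1 ≤ t * Real.log t := by
  rcases eq_or_ne t 1 with h | h
  · simp [h]
  · exact (aux_phi_lt ht h).le

variable {Ω : Type*} [MeasurableSpace Ω]

lemma gibbs (μ ν : Measure Ω) [IsProbabilityMeasure μ] [IsProbabilityMeasure ν]
    (hac : μ ≪ ν) (hint : Integrable (llr μ ν) μ) :
    0 ≤ ∫ x, llr μ ν x ∂μ ∧ ((∫ x, llr μ ν x ∂μ) ≤ 0 → μ = ν) := by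
  set F : Ω → ℝ := fun x => (μ.rnDeriv ν x).toReal with hF
  have hFnn : ∀ x, 0 ≤ F x := fun x => ENNReal.toReal_nonneg
  have hsmul : (fun x => F x * Real.log (F x)) = fun x => (μ.rnDeriv ν x).toReal • llr μ ν x := rfl
  have Iphi : Integrable (fun x => F x * Real.log (F x)) ν := by
    rw [hsmul]; exact (integrable_rnDeriv_smul_iff hac).mpr hint
  have IF : Integrable F ν := Measure.integrable_toReal_rnDeriv
  have hintegral : ∫ x, F x * Real.log (F x) ∂ν = ∫ x, llr μ ν x ∂μ := by
    rw [hsmul]; exact integral_rnDeriv_smul hac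
  have hFint : ∫ x, F x ∂ν = 1 := by
    rw [hF, Measure.integral_toReal_rnDeriv hac]; simp
  -- h := φ∘F - (F - 1) ≥ 0
  have IF1 : Integrable (fun x => F x - 1) ν := IF.sub (integrable_const 1)
  have Ih : Integrable (fun x => F x * Real.log (F x) - (F x - 1)) ν := Iphi.sub IF1
  have hnn : ∀ x, 0 ≤ F x * Real.log (F x) - (F x - 1) := fun x =>
    sub_nonneg.mpr (aux_phi_le (hFnn x))
  have hIh : ∫ x, (F x * Real.log (F x) - (F x - 1)) ∂ν = ∫ x, llr μ ν x ∂μ := by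
    rw [integral_sub Iphi IF1, integral_sub IF (integrable_const 1), hintegral, hFint]
    simp
  constructor
  · rw [← hIh]
    exact integral_nonneg hnn
  · intro hle
    have hzero : ∫ x, (F x * Real.log (F x) - (F x - 1)) ∂ν = 0 :=
      le_antisymm (by rw [hIh]; exact hle) (integral_nonneg hnn)
    have hae : (fun x => F x * Real.log (F x) - (F x - 1)) =ᵐ[ν] 0 :=
      (integral_eq_zero_iff_of_nonneg (fun x => hnn x) Ih).mp hzero
    have hone : μ.rnDeriv ν =ᵐ[ν] (1 : Ω → ℝ≥0∞) := by
      filter_upwards [hae] with x hx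
      have hx' : F x * Real.log (F x) - (F x - 1) = 0 := hx
      have hFx : F x = 1 := by
        by_contra hne
        exact absurd (sub_eq_zero.mp hx') (ne_of_gt (aux_phi_lt (hFnn x) hne))
      rwa [hF, ENNReal.toReal_eq_one_iff] at hFx
    calc μ = ν.withDensity (μ.rnDeriv ν) := (Measure.withDensity_rnDeriv_eq μ ν hac).symm
    _ = ν.withDensity 1 := withDensity_congr_ae hone
    _ = ν := withDensity_one

lemma klDiv_le_coe_iff (μ ν : Measure Ω) (d : ℝ) :
    klDiv μ ν ≤ (d : EReal) ↔ μ ≪ ν ∧ Integrable (llr μ ν) μ ∧ ∫ ω, llr μ ν ω ∂μ ≤ d := by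
  rw [klDiv]
  split_ifs with h
  · rw [EReal.coe_le_coe_iff]
    exact ⟨fun h' => ⟨h.1, h.2, h'⟩, fun h' => h'.2.2⟩
  · simp only [top_le_iff]
    constructor
    · intro h'; exact absurd h' (EReal.coe_ne_top d)
    · intro h'; exact absurd ⟨h'.1, h'.2.1⟩ h

lemma klDiv_self_le (ν : Measure Ω) [IsProbabilityMeasure ν] {d : ℝ} (hd : 0 ≤ d) :
    klDiv ν ν ≤ (d : EReal) := by
  have hllr : llr ν ν =ᵐ[ν] fun _ => (0 : ℝ) := by
    filter_upwards [Measure.rnDeriv_self ν] with x hx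
    simp [llr, hx]
  rw [klDiv_le_coe_iff]
  refine ⟨Measure.AbsolutelyContinuous.rfl, (integrable_const (0:ℝ)).congr hllr.symm, ?_⟩
  rw [integral_congr_ae hllr]
  simpa using hd

variable (μ0 : Measure Ω) (A : Set Ω)

/-- the feasible set -/
def S (d : ℝ) : Set ℝ :=
  {p : ℝ | ∃ μ : Measure Ω, IsProbabilityMeasure μ ∧ klDiv μ μ0 ≤ (d : EReal) ∧
    p = (μ A).toReal}

lemma S_bddAbove (d : ℝ) : BddAbove (S μ0 A d) := by
  refine ⟨1, fun p hp => ?_⟩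
  obtain ⟨μ, hμ, -, rfl⟩ := hp
  calc (μ A).toReal ≤ (μ Set.univ).toReal :=
        ENNReal.toReal_mono (measure_ne_top μ _) (measure_mono (Set.subset_univ A))
  _ = 1 := by simp

lemma S_mem_self [IsProbabilityMeasure μ0] {d : ℝ} (hd : 0 ≤ d) :
    (μ0 A).toReal ∈ S μ0 A d :=
  ⟨μ0, inferInstance, klDiv_self_le μ0 hd, rfl⟩

lemma S_subset {d1 d2 : ℝ} (h : d1 ≤ d2) : S μ0 A d1 ⊆ S μ0 A d2 := by
  rintro p ⟨μ, hμ, hkl, rfl⟩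
  exact ⟨μ, hμ, hkl.trans (EReal.coe_le_coe_iff.mpr h), rfl⟩

lemma S_le_one {d : ℝ} {p : ℝ} (hp : p ∈ S μ0 A d) : p ≤ 1 := by
  obtain ⟨μ, hμ, -, rfl⟩ := hp
  calc (μ A).toReal ≤ (μ Set.univ).toReal :=
        ENNReal.toReal_mono (measure_ne_top μ _) (measure_mono (Set.subset_univ A))
  _ = 1 := by simp

lemma S_mix [IsProbabilityMeasure μ0] {x y a b p q : ℝ} (ha : 0 < a) (hb : 0 < b)
    (hab : a + b = 1) (hp : p ∈ S μ0 A x) (hq : q ∈ S μ0 A y) :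
    a * p + b * q ∈ S μ0 A (a * x + b * y) := by
  obtain ⟨μ1, hμ1, hkl1, rfl⟩ := hp
  obtain ⟨μ2, hμ2, hkl2, rfl⟩ := hq
  rw [klDiv_le_coe_iff] at hkl1 hkl2
  obtain ⟨hac1, hint1, hI1⟩ := hkl1
  obtain ⟨hac2, hint2, hI2⟩ := hkl2
  set c1 : ℝ≥0 := a.toNNReal with hc1def
  set c2 : ℝ≥0 := b.toNNReal with hc2def
  have hc1 : ((c1 : ℝ≥0∞)).toReal = a := by
    simp [hc1def, Real.coe_toNNReal a ha.le]
  have hc2 : ((c2 : ℝ≥0∞)).toReal = b := by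
    simp [hc2def, Real.coe_toNNReal b hb.le]
  set μ : Measure Ω := c1 • μ1 + c2 • μ2 with hμdef
  have hprob : IsProbabilityMeasure μ := by
    constructor
    rw [hμdef, Measure.add_apply]
    simp only [Measure.smul_apply, measure_univ, ENNReal.smul_def, smul_eq_mul, mul_one]
    rw [← ENNReal.coe_add, ← Real.toNNReal_add ha.le hb.le, hab]
    simp
  haveI := hprob
  have hac : μ ≪ μ0 := by
    refine Measure.AbsolutelyContinuous.mk fun s hs h0 => ?_
    rw [hμdef, Measure.add_apply]
    simp [Measure.smul_apply, hac1 h0, hac2 h0]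
  set F1 : Ω → ℝ := fun ω => (μ1.rnDeriv μ0 ω).toReal with hF1
  set F2 : Ω → ℝ := fun ω => (μ2.rnDeriv μ0 ω).toReal with hF2
  set F : Ω → ℝ := fun ω => (μ.rnDeriv μ0 ω).toReal with hFdef
  have hFae : F =ᵐ[μ0] fun ω => a * F1 ω + b * F2 ω := by
    have h1 := Measure.rnDeriv_add (c1 • μ1) (c2 • μ2) μ0
    have h2 := Measure.rnDeriv_smul_left μ1 μ0 c1
    have h3 := Measure.rnDeriv_smul_left μ2 μ0 c2
    filter_upwards [h1, h2, h3, Measure.rnDeriv_lt_top μ1 μ0, Measure.rnDeriv_lt_top μ2 μ0]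
      with ω hω1 hω2 hω3 hlt1 hlt2
    rw [hFdef]
    simp only [hμdef]
    rw [hω1, Pi.add_apply, hω2, hω3]
    simp only [Pi.smul_apply, ENNReal.smul_def, smul_eq_mul]
    rw [ENNReal.toReal_add (ENNReal.mul_ne_top ENNReal.coe_ne_top hlt1.ne)
      (ENNReal.mul_ne_top ENNReal.coe_ne_top hlt2.ne), ENNReal.toReal_mul, ENNReal.toReal_mul,
      hc1, hc2]
  have hconv : ∀ᵐ ω ∂μ0, F ω * Real.log (F ω)
      ≤ a * (F1 ω * Real.log (F1 ω)) + b * (F2 ω * Real.log (F2 ω)) := by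
    filter_upwards [hFae] with ω hω
    rw [hω]
    have hm1 : F1 ω ∈ Set.Ici (0:ℝ) := Set.mem_Ici.mpr ENNReal.toReal_nonneg
    have hm2 : F2 ω ∈ Set.Ici (0:ℝ) := Set.mem_Ici.mpr ENNReal.toReal_nonneg
    have h := Real.convexOn_mul_log.2 hm1 hm2 ha.le hb.le hab
    simpa [smul_eq_mul] using h
  have hlow : ∀ ω, F ω - 1 ≤ F ω * Real.log (F ω) := fun ω =>
    aux_phi_le ENNReal.toReal_nonneg
  have Iphi1 : Integrable (fun ω => F1 ω * Real.log (F1 ω)) μ0 :=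
    (integrable_rnDeriv_smul_iff hac1).mpr hint1
  have Iphi2 : Integrable (fun ω => F2 ω * Real.log (F2 ω)) μ0 :=
    (integrable_rnDeriv_smul_iff hac2).mpr hint2
  have Isum : Integrable
      (fun ω => a * (F1 ω * Real.log (F1 ω)) + b * (F2 ω * Real.log (F2 ω))) μ0 :=
    (Iphi1.const_mul a).add (Iphi2.const_mul b)
  have IF : Integrable F μ0 := Measure.integrable_toReal_rnDeriv
  have IG : Integrable (fun ω => |a * (F1 ω * Real.log (F1 ω)) + b * (F2 ω * Real.log (F2 ω))|
      + (|F ω| + 1)) μ0 := Isum.abs.add (IF.abs.add (integrable_const 1))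
  have Iphi : Integrable (fun ω => F ω * Real.log (F ω)) μ0 := by
    refine Integrable.mono' IG ?_ ?_
    · exact (((μ.measurable_rnDeriv μ0).ennreal_toReal).mul
        ((μ.measurable_rnDeriv μ0).ennreal_toReal).log).aestronglyMeasurable
    · filter_upwards [hconv] with ω hω
      rw [Real.norm_eq_abs, abs_le]
      constructor
      · have := hlow ω
        have h1 : -|F ω| ≤ F ω := neg_abs_le _
        have h2 : (0:ℝ) ≤ |a * (F1 ω * Real.log (F1 ω)) + b * (F2 ω * Real.log (F2 ω))| :=
          abs_nonneg _
        linarith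
      · have h2 := le_abs_self (a * (F1 ω * Real.log (F1 ω)) + b * (F2 ω * Real.log (F2 ω)))
        have h3 : (0:ℝ) ≤ |F ω| := abs_nonneg _
        linarith
  have hintμ : Integrable (llr μ μ0) μ := by
    refine (integrable_rnDeriv_smul_iff hac).mp ?_
    exact Iphi
  have hIμ : ∫ ω, llr μ μ0 ω ∂μ = ∫ ω, F ω * Real.log (F ω) ∂μ0 :=
    (integral_rnDeriv_smul hac).symm
  have hle : ∫ ω, llr μ μ0 ω ∂μ ≤ a * x + b * y := by
    rw [hIμ]
    calc ∫ ω, F ω * Real.log (F ω) ∂μ0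
        ≤ ∫ ω, (a * (F1 ω * Real.log (F1 ω)) + b * (F2 ω * Real.log (F2 ω))) ∂μ0 :=
          integral_mono_ae Iphi Isum hconv
      _ = a * ∫ ω, F1 ω * Real.log (F1 ω) ∂μ0 + b * ∫ ω, F2 ω * Real.log (F2 ω) ∂μ0 := by
          rw [integral_add (Iphi1.const_mul a) (Iphi2.const_mul b), integral_const_mul,
            integral_const_mul]
      _ = a * ∫ ω, llr μ1 μ0 ω ∂μ1 + b * ∫ ω, llr μ2 μ0 ω ∂μ2 := by
          rw [show ∫ ω, F1 ω * Real.log (F1 ω) ∂μ0 = ∫ ω, llr μ1 μ0 ω ∂μ1 from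
            integral_rnDeriv_smul hac1,
            show ∫ ω, F2 ω * Real.log (F2 ω) ∂μ0 = ∫ ω, llr μ2 μ0 ω ∂μ2 from
            integral_rnDeriv_smul hac2]
      _ ≤ a * x + b * y := by
          have := mul_le_mul_of_nonneg_left hI1 ha.le
          have := mul_le_mul_of_nonneg_left hI2 hb.le
          linarith
  have hμA : (μ A).toReal = a * (μ1 A).toReal + b * (μ2 A).toReal := by
    rw [hμdef, Measure.add_apply]
    simp only [Measure.smul_apply, ENNReal.smul_def, smul_eq_mul]
    rw [ENNReal.toReal_add (ENNReal.mul_ne_top ENNReal.coe_ne_top (measure_ne_top μ1 A))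
      (ENNReal.mul_ne_top ENNReal.coe_ne_top (measure_ne_top μ2 A)),
      ENNReal.toReal_mul, ENNReal.toReal_mul, hc1, hc2]
  exact ⟨μ, hprob, (klDiv_le_coe_iff μ μ0 _).mpr ⟨hac, hintμ, hle⟩, hμA.symm⟩

lemma S_mem_one [IsProbabilityMeasure μ0] (hA : MeasurableSet A) (h0 : μ0 A ≠ 0)
    {D : ℝ} (hD : -Real.log (μ0 A).toReal ≤ D) : (1 : ℝ) ∈ S μ0 A D := by
  set r : ℝ≥0 := ((μ0 A)⁻¹).toNNReal with hrdef
  have hAtop : μ0 A ≠ ⊤ := measure_ne_top μ0 A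
  have hrcoe : (r : ℝ≥0∞) = (μ0 A)⁻¹ := ENNReal.coe_toNNReal (by simp [h0])
  set μ1 : Measure Ω := r • μ0.restrict A with hμ1def
  have hμ1A : ∀ s : Set Ω, MeasurableSet s → μ1 s = (μ0 A)⁻¹ * μ0 (s ∩ A) := by
    intro s hs
    rw [hμ1def, Measure.smul_apply, Measure.restrict_apply hs, ENNReal.smul_def, smul_eq_mul,
      hrcoe]
  have hprob : IsProbabilityMeasure μ1 := by
    constructor
    rw [hμ1A Set.univ MeasurableSet.univ, Set.univ_inter]
    exact ENNReal.inv_mul_cancel h0 hAtop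
  have hone : (μ1 A).toReal = 1 := by
    rw [hμ1A A hA, Set.inter_self, ENNReal.inv_mul_cancel h0 hAtop]
    simp
  have hac : μ1 ≪ μ0 := by
    refine Measure.AbsolutelyContinuous.mk fun s hs h' => ?_
    rw [hμ1A s hs]
    have : μ0 (s ∩ A) = 0 :=
      le_antisymm (h' ▸ measure_mono Set.inter_subset_left) zero_le
    simp [this]
  -- μ1 is μ0.withDensity f with f = indicator A r
  set f : Ω → ℝ≥0∞ := A.indicator (fun _ => (r : ℝ≥0∞)) with hfdef
  have hfmeas : Measurable f := measurable_const.indicator hA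
  have hwd : μ1 = μ0.withDensity f := by
    ext s hs
    rw [hμ1A s hs, withDensity_apply f hs, hfdef, lintegral_indicator hA,
      Measure.restrict_restrict hA, lintegral_const, Measure.restrict_apply MeasurableSet.univ,
      Set.univ_inter, hrcoe, Set.inter_comm]
  have hrn : μ1.rnDeriv μ0 =ᵐ[μ0] f := by
    rw [hwd]; exact Measure.rnDeriv_withDensity μ0 hfmeas
  set c : ℝ := -Real.log (μ0 A).toReal with hcdef
  have hAae : ∀ᵐ ω ∂μ1, ω ∈ A := by
    rw [ae_iff]
    have : {ω | ¬ ω ∈ A} = Aᶜ := rfl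
    rw [this, hμ1A Aᶜ hA.compl, Set.compl_inter_self]
    simp
  have hllr : llr μ1 μ0 =ᵐ[μ1] fun _ => c := by
    filter_upwards [hAae, hac.ae_le hrn] with ω hωA hωrn
    rw [llr, hωrn, hfdef, Set.indicator_of_mem hωA, hrcoe, ENNReal.toReal_inv, Real.log_inv,
      hcdef]
  have hint : Integrable (llr μ1 μ0) μ1 := (integrable_const c).congr hllr.symm
  have hI : ∫ ω, llr μ1 μ0 ω ∂μ1 = c := by
    rw [integral_congr_ae hllr]
    simp
  exact ⟨μ1, hprob, (klDiv_le_coe_iff μ1 μ0 D).mpr ⟨hac, hint, by rw [hI]; exact hD⟩, hone.symm⟩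

theorem stmt_4' (μ0 : Measure Ω) [IsProbabilityMeasure μ0]
    (A : Set Ω) (hA : MeasurableSet A) :
    ConcaveOn ℝ (Set.Ici 0) (fun d => sSup (S μ0 A d)) ∧
    sSup (S μ0 A 0) = (μ0 A).toReal ∧
    (∀ d1 d2 : ℝ, 0 ≤ d1 → d1 ≤ d2 → sSup (S μ0 A d1) ≤ sSup (S μ0 A d2)) ∧
    (∀ d1 d2 : ℝ, 0 ≤ d1 → d1 < d2 → sSup (S μ0 A d1) = sSup (S μ0 A d2) →
      sSup (S μ0 A d1) = 0 ∨ sSup (S μ0 A d1) = 1) := by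
  set P : ℝ → ℝ := fun d => sSup (S μ0 A d) with hPdef
  have hne : ∀ d : ℝ, 0 ≤ d → (S μ0 A d).Nonempty := fun d hd => ⟨_, S_mem_self μ0 A hd⟩
  have hbdd := S_bddAbove μ0 A
  have hmono : ∀ d1 d2 : ℝ, 0 ≤ d1 → d1 ≤ d2 → P d1 ≤ P d2 := fun d1 d2 h1 h12 =>
    csSup_le_csSup (hbdd d2) (hne d1 h1) (S_subset μ0 A h12)
  have hle1 : ∀ d : ℝ, 0 ≤ d → P d ≤ 1 := fun d hd =>
    csSup_le (hne d hd) (fun p hp => S_le_one μ0 A hp)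
  have hconc : ConcaveOn ℝ (Set.Ici 0) P := by
    refine ⟨convex_Ici 0, ?_⟩
    intro x hx y hy a b ha hb hab
    have hx0 : (0:ℝ) ≤ x := hx
    have hy0 : (0:ℝ) ≤ y := hy
    rcases eq_or_lt_of_le ha with ha0 | ha0
    · have hb1 : b = 1 := by linarith
      simp [← ha0, hb1]
    rcases eq_or_lt_of_le hb with hb0 | hb0
    · have ha1 : a = 1 := by linarith
      simp [← hb0, ha1]
    simp only [smul_eq_mul]
    have key : ∀ p ∈ S μ0 A x, ∀ q ∈ S μ0 A y, a * p + b * q ≤ P (a * x + b * y) :=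
      fun p hp q hq => le_csSup (hbdd _) (S_mix μ0 A ha0 hb0 hab hp hq)
    have h1 : P x ≤ (P (a * x + b * y) - b * P y) / a := by
      refine csSup_le (hne x hx0) fun p hp => ?_
      rw [le_div_iff₀ ha0]
      have h2 : P y ≤ (P (a * x + b * y) - a * p) / b := by
        refine csSup_le (hne y hy0) fun q hq => ?_
        rw [le_div_iff₀ hb0]
        have := key p hp q hq
        linarith
      have h3 := (le_div_iff₀ hb0).mp h2
      linarith
    have h4 := (le_div_iff₀ ha0).mp h1
    linarith
  refine ⟨hconc, ?_, hmono, ?_⟩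
  · apply le_antisymm
    · refine csSup_le (hne 0 le_rfl) ?_
      rintro p ⟨μ, hμ, hkl, rfl⟩
      rw [klDiv_le_coe_iff] at hkl
      obtain ⟨hac, hint, hI⟩ := hkl
      haveI := hμ
      rw [(gibbs μ μ0 hac hint).2 hI]
    · exact le_csSup (hbdd 0) (S_mem_self μ0 A le_rfl)
  · intro d1 d2 h1 h12 heq
    by_cases h0 : μ0 A = 0
    · left
      apply le_antisymm
      · refine csSup_le (hne d1 h1) ?_
        rintro p ⟨μ, hμ, hkl, rfl⟩
        rw [klDiv_le_coe_iff] at hkl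
        rw [hkl.1 h0]
        simp
      · have h0' : (μ0 A).toReal = 0 := by simp [h0]
        have := le_csSup (hbdd d1) (S_mem_self μ0 A h1)
        rw [h0'] at this
        exact this
    · right
      set c : ℝ := -Real.log (μ0 A).toReal with hcdef
      have hPc1 : ∀ D : ℝ, c ≤ D → 0 ≤ D → P D = 1 := fun D hcD hD0 =>
        le_antisymm (hle1 D hD0) (le_csSup (hbdd D) (S_mem_one μ0 A hA h0 hcD))
      have hc0 : 0 ≤ c := by
        have hεle : (μ0 A).toReal ≤ 1 := by
          calc (μ0 A).toReal ≤ (μ0 Set.univ).toReal :=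
            ENNReal.toReal_mono (measure_ne_top μ0 _) (measure_mono (Set.subset_univ A))
          _ = 1 := by simp
        have := Real.log_nonpos ENNReal.toReal_nonneg hεle
        rw [hcdef]; linarith
      by_cases hcd : c ≤ d2
      · rw [heq]
        exact hPc1 d2 hcd (le_trans h1 h12.le)
      · push_neg at hcd
        set lam : ℝ := (c - d2) / (c - d1) with hlamdef
        have hd1c : d1 < c := lt_trans h12 hcd
        have hlam0 : 0 < lam := div_pos (by linarith) (by linarith)
        have hlam1 : lam < 1 := by
          rw [hlamdef, div_lt_one (by linarith)]
          linarith
        have h5 : lam * (c - d1) = c - d2 :=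
          div_mul_cancel₀ _ (ne_of_gt (by linarith : (0:ℝ) < c - d1))
        have hcomb : lam * d1 + (1 - lam) * c = d2 := by linear_combination (-1 : ℝ) * h5
        have hcv := hconc.2 (Set.mem_Ici.mpr h1) (Set.mem_Ici.mpr hc0) hlam0.le
          (by linarith : (0:ℝ) ≤ 1 - lam) (by ring : lam + (1 - lam) = 1)
        simp only [smul_eq_mul] at hcv
        rw [hcomb] at hcv
        have hPc : P c = 1 := hPc1 c le_rfl hc0
        have hled1 : P d1 ≤ 1 := hle1 d1 h1
        have heq' : P d1 = P d2 := heq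
        rw [hPc, ← heq'] at hcv
        show P d1 = 1
        nlinarith

end Helpers

/-- Proposition 1: `P(d) = sup{μ(A) : D(μ‖μ0) ≤ d}` is concave on `[0,∞)`, satisfies
`P(0) = μ0(A)`, is nondecreasing, and is strictly increasing except where it equals 0 or 1. -/
theorem stmt_4 {Ω : Type*} [MeasurableSpace Ω] (μ0 : Measure Ω) [IsProbabilityMeasure μ0]
    (A : Set Ω) (hA : MeasurableSet A) :
    ConcaveOn ℝ (Set.Ici 0) (compoundOutage μ0 A) ∧
    compoundOutage μ0 A 0 = (μ0 A).toReal ∧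
    (∀ d1 d2 : ℝ, 0 ≤ d1 → d1 ≤ d2 → compoundOutage μ0 A d1 ≤ compoundOutage μ0 A d2) ∧
    (∀ d1 d2 : ℝ, 0 ≤ d1 → d1 < d2 → compoundOutage μ0 A d1 = compoundOutage μ0 A d2 →
      compoundOutage μ0 A d1 = 0 ∨ compoundOutage μ0 A d1 = 1) := by
  exact stmt_4' μ0 A hA
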